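/- Improvement over the initial point: under the hypotheses of the dissipative property for index i (γ² > m·L_i), if the initial velocity satisfies ⟨∇f_i(u₀), u̇₀⟩ ≤ -γ‖u̇₀‖², then the trajectory of (IMOG) starting at (u₀, u̇₀) satisfies f_i(u(t)) ≤ f_i(u₀) for all t ≥ t₀. -/

import Mathlib

open scoped RealInnerProductSpace
open Set Filter Topology

/-- Variational inequality for a minimal-norm element of a convex set. -/
lemma imog_min_norm_inner_ge {H : Type*} [NormedAddCommGroup H] [InnerProductSpace ℝ H]
    {K : Set H} (hK : Convex ℝ K) {p : H} (hp : p ∈ K) (hmin : ∀ y ∈ K, ‖p‖ ≤ ‖y‖)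
    {y : H} (hy : y ∈ K) : ‖p‖ ^ 2 ≤ ⟪y, p⟫ := by
  have hiInf : ‖(0 : H) - p‖ = ⨅ w : K, ‖(0 : H) - w‖ := by
    haveI : Nonempty K := ⟨⟨p, hp⟩⟩
    refine le_antisymm (le_ciInf fun w => ?_)
      (ciInf_le (f := fun w : K => ‖(0 : H) - w‖) ⟨0, fun _ ⟨w, h⟩ => h ▸ norm_nonneg _⟩ ⟨p, hp⟩)
    simp only [zero_sub, norm_neg]
    exact hmin w w.2
  have := (norm_eq_iInf_iff_real_inner_le_zero hK hp).mp hiInf y hy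
  rw [zero_sub, inner_sub_right, inner_neg_left, inner_neg_left] at this
  have h2 : ⟪p, p⟫ ≤ ⟪p, y⟫ := by linarith
  rw [real_inner_self_eq_norm_sq] at h2
  rwa [real_inner_comm]

/-- Improvement over the initial point: under the dissipative hypothesis `γ² > m L_i`,
if the initial velocity satisfies `⟨∇f_i(u₀), u̇₀⟩ ≤ -γ‖u̇₀‖²`, then the (IMOG)
trajectory satisfies `f_i(u(t)) ≤ f_i(u₀)` for all `t ≥ t₀`. -/
theorem imog_improvement_over_initial_point
    {H : Type*} [NormedAddCommGroup H] [InnerProductSpace ℝ H] [CompleteSpace H]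
    {q : ℕ} (f : Fin q → H → ℝ) (hf : ∀ i, ContDiff ℝ 1 (f i))
    (m γ : ℝ) (hm : 0 < m) (hγ : 0 < γ)
    (t₀ T : ℝ) (hT : t₀ < T)
    (u u' u'' : ℝ → H)
    (hu : ∀ t ∈ Set.Ico t₀ T, HasDerivAt u (u' t) t)
    (hu' : ∀ t ∈ Set.Ico t₀ T, HasDerivAt u' (u'' t) t)
    (hode : ∀ t ∈ Set.Ico t₀ T,
      -(m • u'' t + γ • u' t) ∈ convexHull ℝ (Set.range fun i => gradient (f i) (u t)) ∧
      ∀ y ∈ convexHull ℝ (Set.range fun i => gradient (f i) (u t)),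
        ‖m • u'' t + γ • u' t‖ ≤ ‖y‖)
    (i : Fin q) (Li : NNReal)
    (hLi : LipschitzOnWith Li (gradient (f i)) (u '' Set.Ico t₀ T))
    (hHP : m * (Li : ℝ) < γ ^ 2)
    (hinit : ⟪gradient (f i) (u t₀), u' t₀⟫ ≤ -γ * ‖u' t₀‖ ^ 2) :
    ∀ t ∈ Set.Ico t₀ T, f i (u t) ≤ f i (u t₀) := by
  set G : ℝ → H := fun s => gradient (f i) (u s) with hG
  set g : ℝ → ℝ := fun s => f i (u s) with hgdef
  set φ : ℝ → ℝ := fun s => ⟪G s, u' s⟫ with hφdef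
  set n : ℝ → ℝ := fun s => ‖u' s‖ ^ 2 with hndef
  set E : ℝ → ℝ := fun s => g s + (m / γ) * φ s + m * n s with hEdef
  -- derivative of g
  have hg : ∀ x ∈ Set.Ico t₀ T, HasDerivAt g (φ x) x := by
    intro x hx
    have hdf : DifferentiableAt ℝ (f i) (u x) := ((hf i).differentiable one_ne_zero).differentiableAt
    have := hdf.hasGradientAt.hasFDerivAt.comp_hasDerivAt x (hu x hx)
    rw [InnerProductSpace.toDual_apply_apply] at this
    exact this
  -- derivative of n
  have hn : ∀ x ∈ Set.Ico t₀ T, HasDerivAt n (2 * ⟪u'' x, u' x⟫) x := by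
    intro x hx
    have h := ((hu' x hx).inner ℝ (hu' x hx) : HasDerivAt (fun s => ⟪u' s, u' s⟫) _ x)
    have heq : n = fun s => ⟪u' s, u' s⟫ := by
      funext s; simp only [hndef]; rw [real_inner_self_eq_norm_sq]
    rw [heq]
    refine h.congr_deriv ?_
    rw [real_inner_comm]; ring
  -- continuity
  have hGcont : Continuous (gradient (f i)) :=
    (LinearIsometryEquiv.continuous _).comp ((hf i).continuous_fderiv one_ne_zero)
  have hucont : ContinuousOn u (Set.Ico t₀ T) := fun x hx =>
    (hu x hx).continuousAt.continuousWithinAt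
  have hu'cont : ContinuousOn u' (Set.Ico t₀ T) := fun x hx =>
    (hu' x hx).continuousAt.continuousWithinAt
  have hEcont : ContinuousOn E (Set.Ico t₀ T) := by
    have hgc : ContinuousOn g (Set.Ico t₀ T) := fun x hx =>
      (hg x hx).continuousAt.continuousWithinAt
    have hφc : ContinuousOn φ (Set.Ico t₀ T) :=
      ContinuousOn.inner ((hGcont.comp_continuousOn hucont)) hu'cont
    have hnc : ContinuousOn n (Set.Ico t₀ T) := (hu'cont.norm).pow 2
    exact (hgc.add (continuousOn_const.mul hφc)).add (continuousOn_const.mul hnc)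
  -- key inner-product inequality from the ODE
  have hkey : ∀ x ∈ Set.Ico t₀ T, ⟪G x, m • u'' x + γ • u' x⟫ ≤ -‖m • u'' x + γ • u' x‖ ^ 2 := by
    intro x hx
    obtain ⟨hmem, hmin⟩ := hode x hx
    have hy : G x ∈ convexHull ℝ (Set.range fun j => gradient (f j) (u x)) :=
      subset_convexHull ℝ _ ⟨i, rfl⟩
    have hmin' : ∀ y ∈ convexHull ℝ (Set.range fun j => gradient (f j) (u x)),
        ‖-(m • u'' x + γ • u' x)‖ ≤ ‖y‖ := by
      intro y hy'; rw [norm_neg]; exact hmin y hy'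
    have := imog_min_norm_inner_ge (convex_convexHull ℝ _) hmem hmin' hy
    rw [norm_neg, inner_neg_right] at this
    linarith
  -- the pointwise "derivative bound" constant is nonpositive
  have hDle : ∀ x ∈ Set.Ico t₀ T,
      φ x + (m / γ) * ((Li : ℝ) * n x + ⟪G x, u'' x⟫) + m * (2 * ⟪u'' x, u' x⟫) ≤ 0 := by
    intro x hx
    have hk := hkey x hx
    have hexp : ⟪G x, m • u'' x + γ • u' x⟫ = m * ⟪G x, u'' x⟫ + γ * φ x := by
      simp [hφdef, inner_add_right, real_inner_smul_right]
    rw [hexp] at hk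
    have hP : ⟪m • u'' x + γ • u' x, u' x⟫ = m * ⟪u'' x, u' x⟫ + γ * n x := by
      simp only [inner_add_left, real_inner_smul_left, hndef]
      rw [real_inner_self_eq_norm_sq]
    have hCS : ⟪m • u'' x + γ • u' x, u' x⟫ ≤ ‖m • u'' x + γ • u' x‖ * ‖u' x‖ :=
      real_inner_le_norm _ _
    have hn0 : 0 ≤ n x := by positivity
    have hnx : n x = ‖u' x‖ ^ 2 := rfl
    set a := ‖m • u'' x + γ • u' x‖ with ha
    set b := ‖u' x‖ with hb
    have hkey2 : γ * (φ x + (m / γ) * ((Li : ℝ) * n x + ⟪G x, u'' x⟫)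
        + m * (2 * ⟪u'' x, u' x⟫)) ≤ γ * 0 := by
      have hexpand : γ * (φ x + (m / γ) * ((Li : ℝ) * n x + ⟪G x, u'' x⟫)
          + m * (2 * ⟪u'' x, u' x⟫))
          = γ * φ x + m * (Li : ℝ) * n x + m * ⟪G x, u'' x⟫ + 2 * m * γ * ⟪u'' x, u' x⟫ := by
        field_simp
        ring
      rw [hexpand, mul_zero]
      nlinarith [mul_le_mul_of_nonneg_left hCS (by positivity : (0:ℝ) ≤ 2 * γ),
        sq_nonneg (a - γ * b),
        mul_nonneg (le_of_lt (sub_pos.mpr hHP)) (sq_nonneg b)]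
    exact le_of_mul_le_mul_left hkey2 hγ
  -- E is bounded by its initial value
  have hE : ∀ t ∈ Set.Ico t₀ T, E t ≤ E t₀ := by
    intro t ht
    have hIcc : Set.Icc t₀ t ⊆ Set.Ico t₀ T := fun z hz => ⟨hz.1, lt_of_le_of_lt hz.2 ht.2⟩
    have hIco : Set.Ico t₀ t ⊆ Set.Ico t₀ T := fun z hz => ⟨hz.1, lt_trans hz.2 ht.2⟩
    have hbound : ∀ x ∈ Set.Ico t₀ t, ∀ r, (0:ℝ) < r → ∃ᶠ z in 𝓝[>] x, slope E x z < r := by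
      intro x hx r hr
      have hxD : x ∈ Set.Ico t₀ T := hIco hx
      have hxT : x < T := hxD.2
      -- eventual bounds on the three slope pieces
      have hmem : Set.Ioo x T ∈ 𝓝[>] x := Ioo_mem_nhdsGT_of_mem ⟨le_rfl, hxT⟩
      have hne : ∀ᶠ z in 𝓝[>] x, z ≠ x := by
        filter_upwards [self_mem_nhdsWithin] with z hz using ne_of_gt hz
      have hsub : ∀ᶠ z in 𝓝[>] x, z ∈ Set.Ico t₀ T := by
        filter_upwards [hmem] with z hz using ⟨le_trans hxD.1 (le_of_lt hz.1), hz.2⟩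
      -- slope of g tends to φ x
      have hslopeg : Tendsto (slope g x) (𝓝[>] x) (𝓝 (φ x)) :=
        ((hasDerivAt_iff_tendsto_slope.mp (hg x hxD)).mono_left
          (nhdsWithin_mono x fun z hz => ne_of_gt hz))
      -- slope of n tends to 2⟪u'' x, u' x⟫
      have hslopen : Tendsto (slope n x) (𝓝[>] x) (𝓝 (2 * ⟪u'' x, u' x⟫)) :=
        ((hasDerivAt_iff_tendsto_slope.mp (hn x hxD)).mono_left
          (nhdsWithin_mono x fun z hz => ne_of_gt hz))
      -- slope of u and u' tendsto; u' continuous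
      have hslopeu : Tendsto (slope u x) (𝓝[>] x) (𝓝 (u' x)) :=
        ((hasDerivAt_iff_tendsto_slope.mp (hu x hxD)).mono_left
          (nhdsWithin_mono x fun z hz => ne_of_gt hz))
      have hslopeu' : Tendsto (slope u' x) (𝓝[>] x) (𝓝 (u'' x)) :=
        ((hasDerivAt_iff_tendsto_slope.mp (hu' x hxD)).mono_left
          (nhdsWithin_mono x fun z hz => ne_of_gt hz))
      have hu'c : Tendsto u' (𝓝[>] x) (𝓝 (u' x)) :=
        ((hu' x hxD).continuousAt.tendsto).mono_left nhdsWithin_le_nhds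
      -- upper bound for slope of φ
      have hφbound : ∀ᶠ z in 𝓝[>] x,
          slope φ x z ≤ (Li : ℝ) * ‖slope u x z‖ * ‖u' z‖ + ⟪G x, slope u' x z⟫ := by
        filter_upwards [hsub, self_mem_nhdsWithin] with z hzD hzx
        have hxz : (0:ℝ) < z - x := sub_pos.mpr hzx
        have hlip : ‖G z - G x‖ ≤ (Li : ℝ) * ‖u z - u x‖ := by
          have := hLi.dist_le_mul (u z) (Set.mem_image_of_mem u hzD)
            (u x) (Set.mem_image_of_mem u hxD)
          simpa [hG, dist_eq_norm] using this
        have hdecomp : φ z - φ x = ⟪G z - G x, u' z⟫ + ⟪G x, u' z - u' x⟫ := by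
          simp only [hφdef, inner_sub_left, inner_sub_right]; ring
        have h1 : ⟪G z - G x, u' z⟫ ≤ (Li : ℝ) * ‖u z - u x‖ * ‖u' z‖ :=
          le_trans (real_inner_le_norm _ _) (by
            exact mul_le_mul_of_nonneg_right hlip (norm_nonneg _))
        have e1 : ‖slope u x z‖ = ‖u z - u x‖ * (z - x)⁻¹ := by
          rw [slope_def_module, norm_smul, Real.norm_eq_abs, abs_of_pos (inv_pos.mpr hxz)]
          ring
        have e2 : ⟪G x, slope u' x z⟫ = ⟪G x, u' z - u' x⟫ * (z - x)⁻¹ := by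
          rw [slope_def_module, real_inner_smul_right]
          ring
        have e3 : slope φ x z = (φ z - φ x) * (z - x)⁻¹ := by
          rw [slope_def_field]; ring
        have hmain : φ z - φ x ≤ (Li : ℝ) * ‖u z - u x‖ * ‖u' z‖ + ⟪G x, u' z - u' x⟫ := by
          rw [hdecomp]; linarith
        rw [e1, e2, e3]
        calc (φ z - φ x) * (z - x)⁻¹
            ≤ ((Li : ℝ) * ‖u z - u x‖ * ‖u' z‖ + ⟪G x, u' z - u' x⟫) * (z - x)⁻¹ :=
              mul_le_mul_of_nonneg_right hmain (inv_nonneg.mpr (le_of_lt hxz))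
          _ = (Li : ℝ) * (‖u z - u x‖ * (z - x)⁻¹) * ‖u' z‖ + ⟪G x, u' z - u' x⟫ * (z - x)⁻¹ := by
              ring
      -- the limit of the RHS bound
      have hRHS : Tendsto (fun z => (Li : ℝ) * ‖slope u x z‖ * ‖u' z‖ + ⟪G x, slope u' x z⟫)
          (𝓝[>] x) (𝓝 ((Li : ℝ) * ‖u' x‖ * ‖u' x‖ + ⟪G x, u'' x⟫)) := by
        exact (((tendsto_const_nhds.mul hslopeu.norm).mul hu'c.norm).add
          ((tendsto_const_nhds (x := G x)).inner hslopeu'))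
      -- combine: eventually slope E x z < r
      set c1 : ℝ := φ x with hc1
      set c2 : ℝ := (Li : ℝ) * n x + ⟪G x, u'' x⟫ with hc2
      set c3 : ℝ := 2 * ⟪u'' x, u' x⟫ with hc3
      have hmγ : (0:ℝ) < m / γ := by positivity
      have hev1 : ∀ᶠ z in 𝓝[>] x, slope g x z < c1 + r / 3 :=
        hslopeg.eventually (eventually_lt_nhds (by linarith))
      have hev2 : ∀ᶠ z in 𝓝[>] x, (m / γ) * slope φ x z < (m / γ) * c2 + r / 3 := by
        have hTmul : Tendsto (fun z => (m / γ) *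
            ((Li : ℝ) * ‖slope u x z‖ * ‖u' z‖ + ⟪G x, slope u' x z⟫))
            (𝓝[>] x) (𝓝 ((m / γ) * ((Li : ℝ) * ‖u' x‖ * ‖u' x‖ + ⟪G x, u'' x⟫))) :=
          tendsto_const_nhds.mul hRHS
        have hlimeq : (m / γ) * ((Li : ℝ) * ‖u' x‖ * ‖u' x‖ + ⟪G x, u'' x⟫) = (m / γ) * c2 := by
          simp only [hc2, hndef]; ring
        have hlt : (m / γ) * ((Li : ℝ) * ‖u' x‖ * ‖u' x‖ + ⟪G x, u'' x⟫) < (m / γ) * c2 + r / 3 := by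
          rw [hlimeq]; linarith
        filter_upwards [hφbound, hTmul.eventually (eventually_lt_nhds hlt)] with z h1 h2
        exact lt_of_le_of_lt (mul_le_mul_of_nonneg_left h1 (le_of_lt hmγ)) h2
      have hev3 : ∀ᶠ z in 𝓝[>] x, m * slope n x z < m * c3 + r / 3 := by
        have hTmul : Tendsto (fun z => m * slope n x z) (𝓝[>] x) (𝓝 (m * c3)) :=
          tendsto_const_nhds.mul hslopen
        exact hTmul.eventually (eventually_lt_nhds (by linarith))
      have hev : ∀ᶠ z in 𝓝[>] x, slope E x z < r := by
        filter_upwards [hev1, hev2, hev3, hne] with z h1 h2 h3 hzx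
        have hxz' : z - x ≠ 0 := sub_ne_zero.mpr hzx
        have hEslope : slope E x z = slope g x z + (m / γ) * slope φ x z + m * slope n x z := by
          simp only [slope_def_field, hEdef]
          field_simp
          ring
        have hD := hDle x hxD
        rw [hEslope]
        calc slope g x z + (m / γ) * slope φ x z + m * slope n x z
            < (c1 + r/3) + ((m / γ) * c2 + r/3) + (m * c3 + r/3) := by linarith
          _ = (c1 + (m / γ) * c2 + m * c3) + r := by ring
          _ ≤ 0 + r := by
              refine add_le_add_left ?_ r
              simpa [hc1, hc2, hc3] using hD
          _ = r := by ring
      exact hev.frequently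
    exact image_le_of_liminf_slope_right_le_deriv_boundary
      (f := E) (a := t₀) (b := t) (B := fun _ => E t₀) (B' := fun _ => 0)
      (hEcont.mono hIcc) le_rfl continuousOn_const
      (fun x _ => (hasDerivWithinAt_const x _ (E t₀)))
      hbound (Set.right_mem_Icc.mpr ht.1)
  -- step 2: Lyapunov/Gronwall argument
  intro t ht
  have ht₀D : t₀ ∈ Set.Ico t₀ T := ⟨le_rfl, hT⟩
  have hIcc : Set.Icc t₀ t ⊆ Set.Ico t₀ T := fun z hz => ⟨hz.1, lt_of_le_of_lt hz.2 ht.2⟩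
  set E₀ : ℝ := E t₀ with hE₀
  set ψ : ℝ → ℝ := fun z => Real.exp ((γ / m) * z) * (g z - E₀) with hψdef
  have hψ' : ∀ z ∈ Set.Ico t₀ T, HasDerivAt ψ
      (Real.exp ((γ / m) * z) * ((γ / m) * (g z - E₀) + φ z)) z := by
    intro z hz
    have hexp : HasDerivAt (fun w => Real.exp ((γ / m) * w))
        ((γ / m) * Real.exp ((γ / m) * z)) z := by
      have := ((hasDerivAt_id z).const_mul (γ / m)).exp
      simpa [mul_comm] using this
    have := hexp.mul ((hg z hz).sub_const E₀)
    refine this.congr_deriv ?_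
    ring
  have hψderiv_nonpos : ∀ z ∈ Set.Ioo t₀ t, deriv ψ z ≤ 0 := by
    intro z hz
    have hzD : z ∈ Set.Ico t₀ T := hIcc ⟨le_of_lt hz.1, le_of_lt hz.2⟩
    rw [(hψ' z hzD).deriv]
    have hEz := hE z hzD
    have hnz : 0 ≤ n z := by positivity
    have hsum : g z + (m / γ) * φ z ≤ E₀ := by
      have hEexp : E z = g z + (m / γ) * φ z + m * n z := rfl
      rw [hEexp] at hEz
      linarith [mul_nonneg (le_of_lt hm) hnz]
    have hfac : (γ / m) * (g z - E₀) + φ z ≤ 0 := by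
      have hγm : 0 < γ / m := by positivity
      have heq : (γ / m) * (g z - E₀) + φ z = (γ / m) * (g z + (m / γ) * φ z - E₀) := by
        field_simp
        ring
      rw [heq]
      exact mul_nonpos_of_nonneg_of_nonpos (le_of_lt hγm) (sub_nonpos.mpr hsum)
    have hexp_pos : 0 < Real.exp ((γ / m) * z) := Real.exp_pos _
    exact mul_nonpos_of_nonneg_of_nonpos (le_of_lt hexp_pos) hfac
  have hψcont : ContinuousOn ψ (Set.Icc t₀ t) := fun z hz =>
    (hψ' z (hIcc hz)).continuousAt.continuousWithinAt
  have hψanti : AntitoneOn ψ (Set.Icc t₀ t) := by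
    apply antitoneOn_of_deriv_nonpos (convex_Icc t₀ t) hψcont
    · intro z hz
      rw [interior_Icc] at hz
      exact ((hψ' z (hIcc ⟨le_of_lt hz.1, le_of_lt hz.2⟩)).differentiableAt).differentiableWithinAt
    · intro z hz
      rw [interior_Icc] at hz
      exact hψderiv_nonpos z hz
  have hψle : ψ t ≤ ψ t₀ :=
    hψanti (Set.left_mem_Icc.mpr ht.1) (Set.right_mem_Icc.mpr ht.1) ht.1
  -- initial slack: g t₀ - E₀ ≥ 0
  have hslack : 0 ≤ g t₀ - E₀ := by
    have hE0 : E₀ = g t₀ + (m / γ) * φ t₀ + m * n t₀ := rfl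
    have hφ0 : φ t₀ ≤ -γ * n t₀ := hinit
    have h1 : (m / γ) * φ t₀ ≤ (m / γ) * (-γ * n t₀) :=
      mul_le_mul_of_nonneg_left hφ0 (by positivity)
    have heq : (m / γ) * (-γ * n t₀) = -(m * n t₀) := by
      field_simp
    rw [hE0]
    linarith
  have hexp_mono : Real.exp ((γ / m) * t₀) ≤ Real.exp ((γ / m) * t) :=
    Real.exp_le_exp.mpr (mul_le_mul_of_nonneg_left ht.1 (le_of_lt (div_pos hγ hm)))
  have hfinal : g t - E₀ ≤ g t₀ - E₀ := by
    have h1 : Real.exp ((γ / m) * t) * (g t - E₀) ≤ Real.exp ((γ / m) * t₀) * (g t₀ - E₀) := hψle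
    have h2 : Real.exp ((γ / m) * t₀) * (g t₀ - E₀) ≤ Real.exp ((γ / m) * t) * (g t₀ - E₀) :=
      mul_le_mul_of_nonneg_right hexp_mono hslack
    have hpos : 0 < Real.exp ((γ / m) * t) := Real.exp_pos _
    have := le_trans h1 h2
    exact le_of_mul_le_mul_left this hpos
  simpa [hgdef] using (by linarith : g t ≤ g t₀)
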